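/- Let L ≤ U be real numbers with f(x) = (sqrt(1+x^2)-1)/x for x ≠ 0 and f(0)=0. Define g(α) = 1 - f(L)f(U) + α(f(L)+f(U)) - (1 + f(L)f(U)) sqrt(1+α^2). Then g is concave on ℝ. -/

import Mathlib

noncomputable def f (x : ℝ) : ℝ := if x = 0 then 0 else (Real.sqrt (1 + x ^ 2) - 1) / x

lemma abs_f_le_one (x : ℝ) : |f x| ≤ 1 := by
  unfold f
  by_cases hx : x = 0
  · simp [hx]
  · simp only [hx, if_false]
    have h1 : (1:ℝ) ≤ Real.sqrt (1 + x ^ 2) := by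
      nlinarith [Real.sq_sqrt (show (0:ℝ) ≤ 1 + x ^ 2 by positivity),
        Real.sqrt_nonneg (1 + x ^ 2), sq_nonneg x]
    have h2 : Real.sqrt (1 + x ^ 2) ≤ 1 + |x| := by
      rw [show (1 + |x|) = Real.sqrt ((1+|x|)^2) by
        rw [Real.sqrt_sq (by positivity)]]
      apply Real.sqrt_le_sqrt
      nlinarith [abs_nonneg x, sq_abs x]
    rw [abs_div]
    rw [div_le_one (by positivity)]
    rw [abs_of_nonneg (by linarith)]
    linarith

lemma sqrt_one_add_sq_convex : ConvexOn ℝ Set.univ (fun α : ℝ => Real.sqrt (1 + α ^ 2)) := by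
  refine ⟨convex_univ, fun x _ y _ a b ha hb hab => ?_⟩
  simp only [smul_eq_mul]
  have hsx : Real.sqrt (1 + x ^ 2) ^ 2 = 1 + x ^ 2 := Real.sq_sqrt (by positivity)
  have hsy : Real.sqrt (1 + y ^ 2) ^ 2 = 1 + y ^ 2 := Real.sq_sqrt (by positivity)
  have hnx : 0 ≤ Real.sqrt (1 + x ^ 2) := Real.sqrt_nonneg _
  have hny : 0 ≤ Real.sqrt (1 + y ^ 2) := Real.sqrt_nonneg _
  have h1 : 1 + x * y ≤ Real.sqrt (1 + x ^ 2) * Real.sqrt (1 + y ^ 2) := by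
    rcases le_or_gt (1 + x * y) 0 with h | h
    · exact h.trans (mul_nonneg hnx hny)
    · nlinarith [sq_nonneg (x - y), sq_nonneg (Real.sqrt (1 + x ^ 2) * Real.sqrt (1 + y ^ 2) - (1 + x*y)), mul_nonneg hnx hny]
  have key : 1 + (a * x + b * y) ^ 2 ≤
      (a * Real.sqrt (1 + x ^ 2) + b * Real.sqrt (1 + y ^ 2)) ^ 2 := by
    have h2 : 0 ≤ a * b * (Real.sqrt (1 + x ^ 2) * Real.sqrt (1 + y ^ 2) - (1 + x * y)) :=
      mul_nonneg (mul_nonneg ha hb) (sub_nonneg.mpr h1)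
    have ex : a ^ 2 * Real.sqrt (1 + x ^ 2) ^ 2 = a ^ 2 * (1 + x ^ 2) := by rw [hsx]
    have ey : b ^ 2 * Real.sqrt (1 + y ^ 2) ^ 2 = b ^ 2 * (1 + y ^ 2) := by rw [hsy]
    have habsq : (a + b) ^ 2 = 1 := by rw [hab]; ring
    nlinarith [h2, ex, ey, habsq]
  calc Real.sqrt (1 + (a * x + b * y) ^ 2)
      ≤ Real.sqrt ((a * Real.sqrt (1 + x ^ 2) + b * Real.sqrt (1 + y ^ 2)) ^ 2) :=
        Real.sqrt_le_sqrt key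
    _ = a * Real.sqrt (1 + x ^ 2) + b * Real.sqrt (1 + y ^ 2) :=
        Real.sqrt_sq (by positivity)

theorem g_concave (L U : ℝ) (hLU : L ≤ U) :
    ConcaveOn ℝ Set.univ (fun α : ℝ =>
      1 - f L * f U + α * (f L + f U) - (1 + f L * f U) * Real.sqrt (1 + α ^ 2)) := by
  have hc : 0 ≤ 1 + f L * f U := by
    have h := abs_mul (f L) (f U) ▸ mul_le_one₀ (abs_f_le_one L) (abs_nonneg _) (abs_f_le_one U)
    have := neg_abs_le (f L * f U)
    linarith
  have haff : ConcaveOn ℝ Set.univ (fun α : ℝ => 1 - f L * f U + α * (f L + f U)) :=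
    ⟨convex_univ, fun x _ y _ a b ha hb hab => by
      simp only [smul_eq_mul]
      have hb' : b = 1 - a := by linarith
      subst hb'
      exact le_of_eq (by ring)⟩
  have hcv : ConvexOn ℝ Set.univ (fun α : ℝ => (1 + f L * f U) * Real.sqrt (1 + α ^ 2)) :=
    sqrt_one_add_sq_convex.smul hc
  exact haff.sub hcv
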